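/- Let f be C¹ bistable with zeros α₋ < α < α₊ and f > 0 on (α, α₊), f'(α₊) < 0. For any η ∈ (0, α₊ − α) there exists a constant C > 0 such that for all ε ∈ (0, ε₀) with ε₀ small enough: if ξ ≥ α + Cε then Y(ν⁻¹|ln ε|; ξ) ≥ α₊ − η, where Y solves Y' = f(Y), Y(0) = ξ, and ν = f'(α) > 0. -/

import Mathlib

open Set Real

lemma stmt8_lip (f : ℝ → ℝ) (hf : ContDiff ℝ 1 f) (a b : ℝ) :
    ∃ K : ℝ, 0 ≤ K ∧ ∀ x ∈ Icc a b, ∀ y ∈ Icc a b, |f x - f y| ≤ K * |x - y| := by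
  obtain ⟨M, hM⟩ := (isCompact_Icc (a := a) (b := b)).exists_bound_of_continuousOn
    ((hf.continuous_deriv le_rfl).continuousOn)
  refine ⟨max M 0, le_max_right _ _, fun x hx y hy => ?_⟩
  have := Convex.norm_image_sub_le_of_norm_deriv_le (C := max M 0) (s := Icc a b)
    (fun z _ => (hf.differentiable one_ne_zero) z) (fun z hz => le_trans (hM z hz) (le_max_left _ _))
    (convex_Icc a b) hy hx
  simpa [Real.norm_eq_abs] using this

/-- A solution touching an equilibrium point stays there forever after. -/
lemma stmt8_stuck (f : ℝ → ℝ) (hf : ContDiff ℝ 1 f) (p : ℝ) (hfp : f p = 0)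
    (g : ℝ → ℝ) (hg : ∀ t, HasDerivAt g (f (g t)) t)
    (t₁ : ℝ) (h1 : g t₁ = p) : ∀ t ≥ t₁, g t = p := by
  intro b hb
  have hgc : Continuous g := by
    refine continuous_iff_continuousAt.mpr fun t => (hg t).continuousAt
  obtain ⟨M, hM⟩ := (isCompact_Icc (a := t₁) (b := b)).exists_bound_of_continuousOn
    hgc.continuousOn
  set R : ℝ := max M |p| with hR
  have hpmem : p ∈ Icc (-R) R := by
    rw [mem_Icc, ← abs_le]; exact le_max_right _ _
  have hmem : ∀ t ∈ Icc t₁ b, g t ∈ Icc (-R) R := by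
    intro t ht
    rw [mem_Icc, ← abs_le]
    exact le_trans (by simpa using hM t ht) (le_max_left _ _)
  obtain ⟨K, hK0, hK⟩ := stmt8_lip f hf (-R) R
  have key := norm_le_gronwallBound_of_norm_deriv_right_le
    (f := fun t => g t - p) (f' := fun t => f (g t)) (δ := 0) (K := K) (ε := 0) (a := t₁) (b := b)
    ((hgc.sub continuous_const).continuousOn)
    (fun t _ => ((hg t).sub_const p).hasDerivWithinAt)
    (by simp [h1])
    (fun t ht => by
      have h2 := hK (g t) (hmem t ⟨ht.1, ht.2.le⟩) p hpmem
      rw [hfp] at h2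
      simpa [Real.norm_eq_abs, sub_zero] using h2)
  have hb2 := key b ⟨hb, le_rfl⟩
  rw [gronwallBound_ε0_δ0] at hb2
  have : |g b - p| ≤ 0 := by simpa [Real.norm_eq_abs] using hb2
  have := abs_nonneg (g b - p)
  nlinarith [abs_nonneg (g b - p), le_antisymm hb2 (by positivity), abs_eq_zero.mp (le_antisymm ‹|g b - p| ≤ 0› (abs_nonneg _))]

/-- Solutions starting in `(α, αp)` stay in `(α, αp]` and are nondecreasing on `[0, ∞)`. -/
lemma stmt8_invMono (f : ℝ → ℝ) (hf : ContDiff ℝ 1 f) (α αp : ℝ) (hlt : α < αp)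
    (hfp : f αp = 0) (hpos : ∀ s ∈ Ioo α αp, 0 < f s)
    (g : ℝ → ℝ) (hg : ∀ t, HasDerivAt g (f (g t)) t) (hg0 : g 0 ∈ Ioo α αp) :
    (∀ t, 0 ≤ t → g t ∈ Ioc α αp) ∧ (∀ s t, 0 ≤ s → s ≤ t → g s ≤ g t) := by
  have hgc : Continuous g := continuous_iff_continuousAt.mpr fun t => (hg t).continuousAt
  have hderiv : ∀ t, deriv g t = f (g t) := fun t => (hg t).deriv
  have hdiff : Differentiable ℝ g := fun t => (hg t).differentiableAt
  set E : Set ℝ := {t | 0 ≤ t ∧ g t ∉ Ioo α αp} with hE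
  have hEc : IsClosed E := by
    have : E = Ici 0 ∩ g ⁻¹' (Ioo α αp)ᶜ := by
      ext t
      simp only [hE, Set.mem_setOf_eq, Set.mem_inter_iff, Set.mem_Ici, Set.mem_preimage,
        Set.mem_compl_iff]
    rw [this]
    exact isClosed_Ici.inter (isOpen_Ioo.isClosed_compl.preimage hgc)
  rcases eq_empty_or_nonempty E with hEe | hne
  · have hIoo : ∀ t, 0 ≤ t → g t ∈ Ioo α αp := by
      intro t ht
      by_contra h
      have : t ∈ E := ⟨ht, h⟩
      rw [hEe] at this
      exact this
    have hmono : StrictMonoOn g (Ici 0) := by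
      refine strictMonoOn_of_deriv_pos (convex_Ici 0) hgc.continuousOn fun x hx => ?_
      rw [interior_Ici] at hx
      rw [hderiv]
      exact hpos _ (hIoo x hx.le)
    exact ⟨fun t ht => ⟨(hIoo t ht).1, (hIoo t ht).2.le⟩,
      fun s t hs hst => hmono.monotoneOn hs (hs.trans hst) hst⟩
  · have hbdd : BddBelow E := ⟨0, fun x hx => hx.1⟩
    set ts : ℝ := sInf E with hts
    have htsE : ts ∈ E := hEc.csInf_mem hne hbdd
    have hts0 : 0 < ts := by
      rcases lt_or_eq_of_le (le_csInf hne fun x hx => hx.1) with h | h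
      · exact h
      · exfalso
        have h0E : (0 : ℝ) ∈ E := by rw [hts] at htsE; rw [← h] at htsE; exact htsE
        exact h0E.2 hg0
    have hbefore : ∀ t, 0 ≤ t → t < ts → g t ∈ Ioo α αp := by
      intro t ht hlt'
      by_contra h
      exact absurd (csInf_le hbdd ⟨ht, h⟩) (not_le.mpr hlt')
    have hmono0 : StrictMonoOn g (Icc 0 ts) := by
      refine strictMonoOn_of_deriv_pos (convex_Icc 0 ts) hgc.continuousOn fun x hx => ?_
      rw [interior_Icc] at hx
      rw [hderiv]
      exact hpos _ (hbefore x hx.1.le hx.2)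
    have hgt : α < g ts := lt_trans hg0.1
      (hmono0 ⟨le_rfl, hts0.le⟩ ⟨hts0.le, le_rfl⟩ hts0)
    have hle : g ts ≤ αp := by
      have hsub : Ico 0 ts ⊆ {t | g t ≤ αp} :=
        fun t ht => le_of_lt (hbefore t ht.1 ht.2).2
      have hcl : closure (Ico 0 ts) ⊆ {t | g t ≤ αp} :=
        (isClosed_le (by fun_prop) continuous_const).closure_subset_iff.mpr hsub
      have : ts ∈ closure (Ico 0 ts) := by
        rw [closure_Ico hts0.ne]
        exact ⟨hts0.le, le_rfl⟩
      exact hcl this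
    have hgts : g ts = αp := by
      rcases eq_or_lt_of_le hle with h | h
      · exact h
      · exact absurd ⟨hgt, h⟩ htsE.2
    have hstuck := stmt8_stuck f hf αp hfp g hg ts hgts
    have hmem : ∀ t, 0 ≤ t → g t ∈ Ioc α αp := by
      intro t ht
      rcases lt_or_ge t ts with h | h
      · exact ⟨(hbefore t ht h).1, (hbefore t ht h).2.le⟩
      · rw [hstuck t h]; exact ⟨hlt, le_rfl⟩
    refine ⟨hmem, fun s t hs hst => ?_⟩
    rcases le_or_gt t ts with h | h
    · exact hmono0.monotoneOn ⟨hs, hst.trans h⟩ ⟨hs.trans hst, h⟩ hst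
    · rw [hstuck t h.le]
      rcases le_or_gt s ts with h2 | h2
      · calc g s ≤ g ts := hmono0.monotoneOn ⟨hs, h2⟩ ⟨hs.trans h2, le_rfl⟩ h2
          _ = αp := hgts
      · rw [hstuck s h2.le]

/-- The explicit logistic solution. -/
lemma stmt8_logistic (ν L c : ℝ) (hν : 0 < ν) (hL : 0 < L) (hc : 0 < c) (hcν : L * c < ν) :
    ∃ u : ℝ → ℝ, u 0 = c ∧ (∀ t, HasDerivAt u (ν * u t - L * u t ^ 2) t) ∧
      ∀ t, u t = ν * c * exp (ν * t) / ((ν - L * c) + L * c * exp (ν * t)) := by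
  set N : ℝ → ℝ := fun t => ν * c * exp (ν * t) with hN
  set D : ℝ → ℝ := fun t => (ν - L * c) + L * c * exp (ν * t) with hD
  have hDpos : ∀ t, 0 < D t := fun t => by
    have := exp_pos (ν * t)
    have : 0 < L * c * exp (ν * t) := by positivity
    simp only [hD]; linarith
  refine ⟨fun t => N t / D t, ?_, ?_, fun t => rfl⟩
  · simp [hN, hD]
    field_simp
  · intro t
    have hN' : HasDerivAt N (ν * N t) t := by
      have h0 : HasDerivAt (fun t : ℝ => ν * t) ν t := by
        simpa using (hasDerivAt_id t).const_mul ν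
      have h1 : HasDerivAt (fun t : ℝ => exp (ν * t)) (exp (ν * t) * ν) t := h0.exp
      have := h1.const_mul (ν * c)
      simpa [hN, mul_comm, mul_assoc, mul_left_comm] using this
    have hD' : HasDerivAt D (L * c * exp (ν * t) * ν) t := by
      have h0 : HasDerivAt (fun t : ℝ => ν * t) ν t := by
        simpa using (hasDerivAt_id t).const_mul ν
      have h1 : HasDerivAt (fun t : ℝ => exp (ν * t)) (exp (ν * t) * ν) t := h0.exp
      have := (h1.const_mul (L * c)).const_add (ν - L * c)
      simpa [hD, mul_comm, mul_assoc, mul_left_comm] using this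
    have := hN'.div hD' (hDpos t).ne'
    refine this.congr_deriv (Eq.symm ?_)
    have hDt : D t ≠ 0 := (hDpos t).ne'
    show ν * (N t / D t) - L * (N t / D t) ^ 2 = (ν * N t * D t - N t * (L * c * rexp (ν * t) * ν)) / D t ^ 2
    field_simp
    simp only [hN, hD]
    ring

/-- Comparison with the logistic subsolution. -/
lemma stmt8_comp (f : ℝ → ℝ) (α ν L : ℝ) (g u : ℝ → ℝ)
    (hg : ∀ t, HasDerivAt g (f (g t)) t)
    (hu : ∀ t, HasDerivAt u (ν * u t - L * u t ^ 2) t)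
    (b : ℝ) (hb : 0 ≤ b)
    (hlow : ∀ t ∈ Icc (0:ℝ) b, (g t - α) * (ν - L * (g t - α)) ≤ f (g t))
    (h0 : u 0 ≤ g 0 - α) :
    u b ≤ g b - α := by
  have hgc : Continuous g := continuous_iff_continuousAt.mpr fun t => (hg t).continuousAt
  have huc : Continuous u := continuous_iff_continuousAt.mpr fun t => (hu t).continuousAt
  set h : ℝ → ℝ := fun t => ν - L * (u t + (g t - α)) with hh
  have hhc : Continuous h :=
    continuous_const.sub (continuous_const.mul (huc.add (hgc.sub continuous_const)))
  set A : ℝ → ℝ := fun t => ∫ s in (0:ℝ)..t, h s with hA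
  have hA' : ∀ t, HasDerivAt A (h t) t := fun t => (hhc.integral_hasStrictDerivAt 0 t).hasDerivAt
  set Φ : ℝ → ℝ := fun t => (u t - (g t - α)) * exp (-A t) with hΦ
  have hΦ' : ∀ t, HasDerivAt Φ
      ((ν * u t - L * u t ^ 2 - f (g t)) * exp (-A t)
        + (u t - (g t - α)) * (exp (-A t) * -h t)) t := by
    intro t
    exact ((hu t).sub ((hg t).sub_const α)).mul ((hA' t).neg.exp)
  have hanti : AntitoneOn Φ (Icc 0 b) := by
    have hAc : Continuous A := continuous_iff_continuousAt.mpr fun t => (hA' t).continuousAt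
    have hΦc : Continuous Φ :=
      (huc.sub (hgc.sub continuous_const)).mul (Real.continuous_exp.comp hAc.neg)
    refine antitoneOn_of_deriv_nonpos (convex_Icc 0 b) hΦc.continuousOn
      (fun x _ => (hΦ' x).differentiableAt.differentiableWithinAt) ?_
    intro x hx
    rw [interior_Icc] at hx
    rw [(hΦ' x).deriv]
    have hxI : x ∈ Icc (0:ℝ) b := ⟨hx.1.le, hx.2.le⟩
    have hl := hlow x hxI
    have key : (ν * u x - L * u x ^ 2 - f (g x)) + (u x - (g x - α)) * (-h x) ≤ 0 := by
      have : (ν * u x - L * u x ^ 2) + (u x - (g x - α)) * (-h x)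
          = (g x - α) * (ν - L * (g x - α)) := by simp only [hh]; ring
      linarith
    have hexp : 0 < exp (-A x) := exp_pos _
    nlinarith [key, hexp]
  have hb0 : Φ b ≤ Φ 0 := hanti ⟨le_rfl, hb⟩ ⟨hb, le_rfl⟩ hb
  have hΦ0 : Φ 0 ≤ 0 := by
    have : A 0 = 0 := intervalIntegral.integral_same
    simp only [hΦ, this, neg_zero, exp_zero, mul_one]
    linarith
  have hΦb : (u b - (g b - α)) * exp (-A b) ≤ 0 := le_trans hb0 hΦ0
  have hexp : 0 < exp (-A b) := exp_pos _
  nlinarith [hΦb, hexp]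

set_option maxHeartbeats 1600000 in
/-- Rapid convergence to the stable state α₊ on the time scale ν⁻¹|ln ε|,
starting Cε above the unstable zero α. -/
theorem stmt8 (f : ℝ → ℝ) (hf : ContDiff ℝ 2 f)
    (αm α αp : ℝ) (hα1 : αm < α) (hα2 : α < αp)
    (hfm : f αm = 0) (hfa : f α = 0) (hfp : f αp = 0)
    (hfm' : deriv f αm < 0) (hfp' : deriv f αp < 0)
    (ν : ℝ) (hν : ν = deriv f α) (hνpos : 0 < ν)
    (hpos : ∀ s ∈ Set.Ioo α αp, 0 < f s)
    (Y : ℝ → ℝ → ℝ)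
    (hODE : ∀ ξ τ, HasDerivAt (fun t => Y t ξ) (f (Y τ ξ)) τ)
    (hinit : ∀ ξ, Y 0 ξ = ξ) :
    ∀ η ∈ Set.Ioo 0 (αp - α), ∃ C > 0, ∃ ε₀ > 0, ∀ ε ∈ Set.Ioo 0 ε₀, ∀ ξ,
      α + C * ε ≤ ξ → αp - η ≤ Y (ν⁻¹ * |Real.log ε|) ξ := by
  intro η hη
  obtain ⟨hη0, hη1⟩ := hη
  have hf1 : ContDiff ℝ 1 f := hf.of_le (by norm_num)
  have hf'1 : ContDiff ℝ 1 (deriv f) := by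
    have h2 : (2 : WithTop ℕ∞) = 1 + 1 := by norm_num
    rw [h2] at hf
    exact (contDiff_succ_iff_deriv.mp hf).2.2
  obtain ⟨L₀, hL₀0, hL₀⟩ := stmt8_lip (deriv f) hf'1 α αp
  obtain ⟨L, hLdef⟩ : ∃ x : ℝ, x = L₀ + 1 := ⟨_, rfl⟩
  have hLpos : 0 < L := by rw [hLdef]; linarith
  -- quadratic lower bound for f on [α, αp]
  have hquad : ∀ y ∈ Icc α αp, (y - α) * (ν - L * (y - α)) ≤ f y := by
    intro y hy
    rcases eq_or_lt_of_le hy.1 with he | hlt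
    · simp [← he, hfa]
    · obtain ⟨c, hc, hcd⟩ := exists_hasDerivAt_eq_slope f (deriv f) hlt
        (hf1.continuous.continuousOn) (fun x _ => ((hf1.differentiable one_ne_zero) x).hasDerivAt)
      have hcI : c ∈ Icc α αp := ⟨hc.1.le, hc.2.le.trans hy.2⟩
      have hαI : α ∈ Icc α αp := ⟨le_rfl, hα2.le⟩
      have hd := abs_le.mp (hL₀ c hcI α hαI)
      have h2 : |c - α| ≤ y - α := by
        rw [abs_of_nonneg (by linarith [hc.1] : (0:ℝ) ≤ c - α)]
        linarith [hc.2]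
      have h1 : ν - L * (y - α) ≤ deriv f c := by
        rw [hν]
        have hmul := mul_le_mul_of_nonneg_left h2 hL₀0
        have hy0 : (0:ℝ) ≤ y - α := by linarith
        rw [hLdef]
        linarith [hd.1, hmul, hy0]
      have hfy : f y = deriv f c * (y - α) := by
        rw [hcd, hfa, sub_zero, div_mul_cancel₀ _ (sub_ne_zero.mpr hlt.ne')]
      rw [hfy]
      calc (y - α) * (ν - L * (y - α)) ≤ (y - α) * deriv f c :=
            mul_le_mul_of_nonneg_left h1 (by linarith)
        _ = deriv f c * (y - α) := mul_comm _ _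
  obtain ⟨μ, hμdef⟩ : ∃ x : ℝ, x = αp - η := ⟨_, rfl⟩
  have hμ1 : α < μ := by rw [hμdef]; linarith
  have hμ2 : μ < αp := by rw [hμdef]; linarith
  obtain ⟨d, hddef⟩ : ∃ x : ℝ, x = min (ν / (2 * L)) (μ - α) := ⟨_, rfl⟩
  have hd0 : 0 < d := by rw [hddef]; exact lt_min (by positivity) (by linarith)
  have hd1 : d ≤ ν / (2 * L) := by rw [hddef]; exact min_le_left _ _
  have hd2 : d ≤ μ - α := by rw [hddef]; exact min_le_right _ _
  obtain ⟨y₀, hy₀mem, hy₀min⟩ := isCompact_Icc.exists_isMinOn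
    (nonempty_Icc.mpr (by linarith : α + d ≤ μ)) (hf1.continuous.continuousOn)
  obtain ⟨m, hmdef⟩ : ∃ x : ℝ, x = f y₀ := ⟨_, rfl⟩
  have hm0 : 0 < m := by
    rw [hmdef]
    exact hpos y₀ ⟨by linarith [hy₀mem.1], lt_of_le_of_lt hy₀mem.2 hμ2⟩
  have hmle : ∀ y ∈ Icc (α + d) μ, m ≤ f y := fun y hy => by
    rw [hmdef]; exact (isMinOn_iff.mp hy₀min) y hy
  obtain ⟨τ, hτdef⟩ : ∃ x : ℝ, x = (μ - α) / m := ⟨_, rfl⟩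
  have hτ0 : 0 < τ := by rw [hτdef]; exact div_pos (by linarith) hm0
  obtain ⟨q, hqdef⟩ : ∃ x : ℝ, x = exp (-(ν * τ)) := ⟨_, rfl⟩
  have hq0 : 0 < q := by rw [hqdef]; exact exp_pos _
  have hq1 : q < 1 := by
    rw [hqdef]
    calc exp (-(ν * τ)) < exp 0 := Real.exp_lt_exp.mpr
          (by have := mul_pos hνpos hτ0; linarith)
      _ = 1 := Real.exp_zero
  obtain ⟨C, hCdef⟩ : ∃ x : ℝ, x = 4 * d / q := ⟨_, rfl⟩
  have hC0 : 0 < C := by rw [hCdef]; exact div_pos (by linarith) hq0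
  obtain ⟨ε₀, hεdef⟩ : ∃ x : ℝ, x = min q (ν / (2 * L * C)) := ⟨_, rfl⟩
  have hε₀0 : 0 < ε₀ := by
    rw [hεdef]
    exact lt_min hq0 (div_pos hνpos (by positivity))
  refine ⟨C, hC0, ε₀, hε₀0, ?_⟩
  rintro ε ⟨hε0, hεlt⟩ ξ hξ
  rw [hεdef] at hεlt
  have hεq : ε < q := lt_of_lt_of_le hεlt (min_le_left _ _)
  have hεν : ε < ν / (2 * L * C) := lt_of_lt_of_le hεlt (min_le_right _ _)
  have hε1 : ε < 1 := hεq.trans hq1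
  have hlogneg : Real.log ε < 0 := Real.log_neg hε0 hε1
  obtain ⟨T, hTdef⟩ : ∃ x : ℝ, x = ν⁻¹ * |Real.log ε| := ⟨_, rfl⟩
  rw [← hTdef]
  have hTval : T = ν⁻¹ * (-Real.log ε) := by rw [hTdef, abs_of_neg hlogneg]
  have hT0 : 0 ≤ T := by rw [hTdef]; positivity
  have hlq : Real.log ε < -(ν * τ) := by
    have h7 := Real.log_lt_log hε0 hεq
    rw [hqdef, Real.log_exp] at h7
    exact h7
  have hTτ : τ < T := by
    rw [hTval]
    have h5 : ν * τ < -Real.log ε := by linarith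
    have h6 := mul_lt_mul_of_pos_left h5 (inv_pos.mpr hνpos)
    rwa [← mul_assoc, inv_mul_cancel₀ hνpos.ne', one_mul] at h6
  set g : ℝ → ℝ := fun t => Y t ξ with hgdef
  have hg : ∀ t, HasDerivAt g (f (g t)) t := fun t => hODE ξ t
  have hg0 : g 0 = ξ := hinit ξ
  have hgc : Continuous g := continuous_iff_continuousAt.mpr fun t => (hg t).continuousAt
  rw [← hμdef]
  show μ ≤ g T
  rcases lt_or_ge ξ αp with hξp | hξp
  · -- main case: ξ ∈ (α, αp)
    have hξα : α < ξ := by linarith [mul_pos hC0 hε0, hξ]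
    obtain ⟨hIoc, hmono⟩ := stmt8_invMono f hf1 α αp hα2 hfp hpos g hg
      (by rw [hg0]; exact ⟨hξα, hξp⟩)
    obtain ⟨c, hcdef⟩ : ∃ x : ℝ, x = C * ε := ⟨_, rfl⟩
    have hc0 : 0 < c := by rw [hcdef]; exact mul_pos hC0 hε0
    have hcν : L * c < ν := by
      have h1 : c < C * (ν / (2 * L * C)) := by
        rw [hcdef]; exact mul_lt_mul_of_pos_left hεν hC0
      have h2 : C * (ν / (2 * L * C)) = ν / (2 * L) := by field_simp
      rw [h2] at h1
      rw [lt_div_iff₀ (by positivity : (0:ℝ) < 2 * L)] at h1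
      have h3 : c * (2 * L) = 2 * (L * c) := by ring
      have h4 : 0 < L * c := mul_pos hLpos hc0
      linarith [h1, h3.symm.le, h3.le, h4]
    obtain ⟨u, hu0, hu', huval⟩ := stmt8_logistic ν L c hνpos hLpos hc0 hcν
    obtain ⟨T', hT'def⟩ : ∃ x : ℝ, x = T - τ := ⟨_, rfl⟩
    have hT'0 : 0 < T' := by rw [hT'def]; linarith
    have hcomp : u T' ≤ g T' - α := by
      apply stmt8_comp f α ν L g u hg hu' T' hT'0.le
      · intro t ht
        have := hIoc t ht.1
        exact hquad (g t) ⟨this.1.le, this.2⟩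
      · rw [hu0, hg0, hcdef]; linarith [hξ]
    have hE : exp (ν * T') = q / ε := by
      have hν0 : ν ≠ 0 := hνpos.ne'
      have h1 : ν * T' = -Real.log ε - ν * τ := by
        rw [hT'def, hTval, mul_sub, ← mul_assoc, mul_inv_cancel₀ hνpos.ne', one_mul]
      rw [h1, sub_eq_add_neg, Real.exp_add, Real.exp_neg, Real.exp_log hε0, hqdef]
      ring
    have hud : d ≤ u T' := by
      rw [huval T', hE]
      have hden : 0 < (ν - L * c) + L * c * (q / ε) := by
        have hp1 : 0 < ν - L * c := by linarith [hcν]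
        have hp2 : 0 < L * c * (q / ε) := by positivity
        exact add_pos hp1 hp2
      rw [le_div_iff₀ hden]
      have hcq : c * (q / ε) = C * q := by rw [hcdef]; field_simp
      have hCq : C * q = 4 * d := by rw [hCdef]; exact div_mul_cancel₀ _ hq0.ne'
      have hdL : d * L ≤ ν / 2 := by
        have h2L : (0:ℝ) < 2 * L := by positivity
        rw [le_div_iff₀ h2L] at hd1
        linarith [hd1]
      have key1 : L * c * (q / ε) = L * (4 * d) := by rw [mul_assoc, hcq, hCq]
      have key2 : ν * c * (q / ε) = ν * (4 * d) := by rw [mul_assoc, hcq, hCq]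
      rw [key1, key2]
      have h10 : 0 ≤ d * (ν / 2 - d * L) := mul_nonneg hd0.le (by linarith)
      have h11 : 0 ≤ d * (L * c) := mul_nonneg hd0.le (mul_pos hLpos hc0).le
      linarith [h10, h11, mul_nonneg hd0.le hνpos.le]
    have hgT' : α + d ≤ g T' := by linarith
    by_contra hcon
    push_neg at hcon
    have hwin : ∀ t ∈ Icc T' T, g t ∈ Icc (α + d) μ := by
      intro t ht
      constructor
      · exact le_trans hgT' (hmono T' t hT'0.le ht.1)
      · have := hmono t T (le_trans hT'0.le ht.1) ht.2
        linarith [hcon]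
    have hχ : MonotoneOn (fun t => g t - m * t) (Icc T' T) := by
      have hder : ∀ x, HasDerivAt (fun t => g t - m * t) (f (g x) - m) x := by
        intro x
        have h1 : HasDerivAt (fun t : ℝ => m * t) m x := by
          simpa using (hasDerivAt_id x).const_mul m
        exact (hg x).sub h1
      have hχc : Continuous (fun t : ℝ => g t - m * t) :=
        continuous_iff_continuousAt.mpr fun x => (hder x).continuousAt
      apply monotoneOn_of_deriv_nonneg (convex_Icc T' T) hχc.continuousOn
        (fun x _ => (hder x).differentiableAt.differentiableWithinAt)
      intro x hx
      rw [interior_Icc] at hx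
      rw [(hder x).deriv]
      have := hmle (g x) (hwin x ⟨hx.1.le, hx.2.le⟩)
      linarith
    have hfin := hχ (left_mem_Icc.mpr (by linarith)) (right_mem_Icc.mpr (by linarith))
      (by linarith : T' ≤ T)
    have hmτ : m * τ = μ - α := by rw [hτdef]; field_simp
    have : μ + d ≤ g T := by
      have h3 : g T' - m * T' ≤ g T - m * T := hfin
      have h4 : m * T - m * T' = m * τ := by rw [hT'def]; ring
      linarith [hgT', h3, h4, hmτ]
    linarith [hcon, hd0]
  · -- case ξ ≥ αp
    rcases le_or_gt αp (g T) with hgT | hgT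
    · linarith [hη0]
    · exfalso
      rcases eq_or_lt_of_le hξp with he | hlt
      · have := stmt8_stuck f hf1 αp hfp g hg 0 (by rw [hg0, ← he]) T hT0
        linarith
      · set E : Set ℝ := {t | t ∈ Icc 0 T ∧ g t ≤ αp} with hEdef
        have hEc : IsClosed E := by
          have : E = Icc 0 T ∩ {t | g t ≤ αp} := by ext t; simp [hEdef, Set.mem_setOf_eq]
          rw [this]
          exact isClosed_Icc.inter (isClosed_le hgc continuous_const)
        have hne : E.Nonempty := ⟨T, ⟨hT0, le_rfl⟩, hgT.le⟩
        have hbdd : BddBelow E := ⟨0, fun x hx => hx.1.1⟩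
        set ts : ℝ := sInf E with htsdef
        have htsE : ts ∈ E := hEc.csInf_mem hne hbdd
        have hts0 : 0 < ts := by
          rcases lt_or_eq_of_le (le_csInf hne fun x hx => hx.1.1) with h | h
          · exact h
          · exfalso
            have : g 0 ≤ αp := by rw [htsdef] at htsE; rw [← h] at htsE; exact htsE.2
            rw [hg0] at this
            linarith
        have hbefore : ∀ t, 0 ≤ t → t < ts → αp < g t := by
          intro t ht hlt'
          by_contra hcon
          push_neg at hcon
          have : t ∈ E := ⟨⟨ht, hlt'.le.trans htsE.1.2⟩, hcon⟩
          exact absurd (csInf_le hbdd this) (not_le.mpr hlt')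
        have hge : αp ≤ g ts := by
          have hsub : Ico 0 ts ⊆ {t | αp ≤ g t} := fun t ht => (hbefore t ht.1 ht.2).le
          have hcl : closure (Ico 0 ts) ⊆ {t | αp ≤ g t} :=
            (isClosed_le continuous_const hgc).closure_subset_iff.mpr hsub
          apply hcl
          rw [closure_Ico hts0.ne]
          exact ⟨hts0.le, le_rfl⟩
        have hgts : g ts = αp := le_antisymm htsE.2 hge
        have := stmt8_stuck f hf1 αp hfp g hg ts hgts T htsE.1.2
        linarith
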